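/- For every finite subset I ⊆ C, every sequence vI ∈ Seq(I), and every s ∈ {1,…,n}, the identity B_{vI}(t_I; z_s) = ∑_{vJ ∈ Seq(I)} S(vI,vJ)^{(s)} · E_{vJ;s}(t_I; z_s) holds in the field ℂ(t). -/

import Mathlib

/- STATEMENT 0.
Fix a finite index set `C`, `n ≥ 1` distinct complex numbers `z 1, …, z n`, a symmetric map
`a : C × C → ℂ` and numbers `b i s = a(i,s)`.  For a sequence `vI ∈ Seq(I)` (a nodup list
enumerating the finite set `I ⊆ C`) and `s`, the rational functions `B_{vI}(t_I; z_s)`,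
`E_{vI;s}(t_I;z_s)` and the numbers `S(vI,vJ)^{(s)}` are defined below; the theorem asserts
`B_{vI}(t_I; z_s) = ∑_{vJ ∈ Seq(I)} S(vI,vJ)^{(s)} · E_{vJ;s}(t_I; z_s)` in `ℂ(t)`. -/

noncomputable section

/-- The field `ℂ(t)` of rational functions in commuting variables `t i`, `i ∈ C`. -/
abbrev FF (C : Type) := FractionRing (MvPolynomial C ℂ)

/-- The variable `t i` as an element of `ℂ(t)`. -/
def tv {C : Type} (i : C) : FF C := algebraMap (MvPolynomial C ℂ) (FF C) (MvPolynomial.X i)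

/-- A complex constant as an element of `ℂ(t)`. -/
def cc {C : Type} (w : ℂ) : FF C := algebraMap (MvPolynomial C ℂ) (FF C) (MvPolynomial.C w)

/-- Auxiliary product: `Eaux w [i₁,…,i_N] = 1/(t_{i₁} − w) · ∏_{j=2}^N 1/(t_{i_j} − t_{i_{j−1}})`. -/
def Eaux {C : Type} (w : FF C) : List C → FF C
  | [] => 1
  | i :: tl => (tv i - w)⁻¹ * Eaux (tv i) tl

/-- `E_{vI;s}(t_I; z_s)` for `vI = (i₁,…,i_N)`. -/
def Efun {C : Type} (z : ℂ) (l : List C) : FF C := Eaux (cc z) l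

/-- `B_{vI}(t_I; z_s) = ∏_{p=1}^N ( a(i_p,s)/(t_{i_p} − z_s) + ∑_{q<p} a(i_p,i_q)/(t_{i_p} − t_{i_q}) )`. -/
def Bfun {C : Type} (a : C → C → ℂ) (b : C → ℂ) (z : ℂ) (l : List C) : FF C :=
  ∏ p : Fin l.length,
    (cc (b (l.get p)) / (tv (l.get p) - cc z)
      + ∑ q : Fin l.length, if q < p then
          cc (a (l.get p) (l.get q)) / (tv (l.get p) - tv (l.get q)) else 0)

/-- The recursively defined numbers `S(vI,vJ)^{(s)}`, with the second sequence `vJ` given in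
reversed order (so that the recursion removes its head, which is the last entry `j_N` of `vJ`). -/
def Ssym {C : Type} [DecidableEq C] (a : C → C → ℂ) (b : C → ℂ) : List C → List C → ℂ
  | vI, [] => if vI = [] then 1 else 0
  | vI, j :: rest =>
    ∑ q : Fin vI.length,
      if vI.get q = j then
        (b j + ∑ p : Fin vI.length, if p < q then a (vI.get p) j else 0)
          * Ssym a b (vI.eraseIdx q) rest
      else 0

/-- `S(vI,vJ)^{(s)}`. -/
def Sfun {C : Type} [DecidableEq C] (a : C → C → ℂ) (b : C → ℂ) (vI vJ : List C) : ℂ :=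
  Ssym a b vI vJ.reverse

namespace Stmt0
variable {C : Type}

lemma algMap_inj : Function.Injective (algebraMap (MvPolynomial C ℂ) (FF C)) :=
  IsFractionRing.injective _ _

lemma tv_ne_tv {i j : C} (h : i ≠ j) : (tv i : FF C) ≠ tv j := fun he =>
  h (MvPolynomial.X_injective (algMap_inj he))

lemma tv_ne_cc (i : C) (z : ℂ) : (tv i : FF C) ≠ cc z := by
  intro he
  have h2 : (MvPolynomial.X i : MvPolynomial C ℂ) = MvPolynomial.C z := algMap_inj he
  have := congrArg MvPolynomial.totalDegree h2
  simp [MvPolynomial.totalDegree_X, MvPolynomial.totalDegree_C] at this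

/-- `cc` as a ring hom. -/
def ccH : ℂ →+* FF C :=
  (algebraMap (MvPolynomial C ℂ) (FF C)).comp (MvPolynomial.C : ℂ →+* MvPolynomial C ℂ)

lemma cc_def (w : ℂ) : (cc w : FF C) = ccH w := rfl

lemma cc_add (x y : ℂ) : (cc (x + y) : FF C) = cc x + cc y := by simp [cc_def, map_add]
lemma cc_mul (x y : ℂ) : (cc (x * y) : FF C) = cc x * cc y := by simp [cc_def, map_mul]
lemma cc_one : (cc 1 : FF C) = 1 := by simp [cc_def, map_one]
lemma cc_list_sum (l : List ℂ) : (cc l.sum : FF C) = (l.map cc).sum := by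
  simp only [cc_def, map_list_sum]
  rfl

lemma sum_map_take_eq {α : Type} {M : Type*} [AddCommMonoid M] (f : α → M) :
    ∀ (l : List α) (p : ℕ),
      ((l.take p).map f).sum = ∑ q : Fin l.length, if (q : ℕ) < p then f (l.get q) else 0
  | [], p => by simp
  | x :: tl, 0 => by simp
  | x :: tl, p + 1 => by
    simp only [List.length_cons, List.take_succ_cons, List.map_cons, List.sum_cons]
    rw [Fin.sum_univ_succ, sum_map_take_eq f tl p]
    simp [Nat.succ_lt_succ_iff]

lemma sum_map_eq_fin {α : Type} {M : Type*} [AddCommMonoid M] (f : α → M) (l : List α) :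
    (l.map f).sum = ∑ q : Fin l.length, f (l.get q) := by
  conv_lhs => rw [← List.take_length (l := l)]
  rw [sum_map_take_eq]
  exact Finset.sum_congr rfl fun q _ => if_pos q.isLt

lemma key_frac {K : Type*} [Field K] {x v w : K} (hxw : x ≠ w) (hvw : v ≠ w) (hxv : x ≠ v) :
    (x - w)⁻¹ * (v - w)⁻¹ = (x - w)⁻¹ * (v - x)⁻¹ + (x - v)⁻¹ * (v - w)⁻¹ := by
  have h1 : x - w ≠ 0 := sub_ne_zero.mpr hxw
  have h2 : v - w ≠ 0 := sub_ne_zero.mpr hvw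
  have h3 : x - v ≠ 0 := sub_ne_zero.mpr hxv
  have h4 : v - x ≠ 0 := sub_ne_zero.mpr (Ne.symm hxv)
  field_simp
  ring

lemma Eaux_inv_mul (i : C) :
    ∀ (l : List C) (w : FF C), l.Nodup → i ∉ l → tv i ≠ w → (∀ j ∈ l, tv j ≠ w) →
      (tv i - w)⁻¹ * Eaux w l
        = ∑ m ∈ Finset.range (l.length + 1), Eaux w (l.insertIdx m i)
  | [], w, _, _, _, _ => by simp [Eaux]
  | j :: tl, w, hnd, hil, hiw, hlw => by
    have hij : i ≠ j := fun h => hil (h ▸ List.mem_cons_self (a := i) (l := tl))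
    have hjw : tv j ≠ w := hlw j (List.mem_cons_self (a := j) (l := tl))
    have hitl : i ∉ tl := fun h => hil (List.mem_cons_of_mem j h)
    have hndc := List.nodup_cons.1 hnd
    have htlj : ∀ k ∈ tl, (tv k : FF C) ≠ tv j := fun k hk =>
      tv_ne_tv (by rintro rfl; exact hndc.1 hk)
    have hIH := Eaux_inv_mul i tl (tv j) hndc.2 hitl (tv_ne_tv hij) htlj
    simp only [List.length_cons]
    rw [Finset.sum_range_succ']
    simp only [List.insertIdx_succ_cons, List.insertIdx_zero]
    have hsum : ∑ m ∈ Finset.range (tl.length + 1), Eaux w (j :: tl.insertIdx m i)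
        = (tv j - w)⁻¹ * ((tv i - tv j)⁻¹ * Eaux (tv j) tl) := by
      simp only [Eaux]
      rw [← Finset.mul_sum, ← hIH]
    rw [hsum]
    simp only [Eaux]
    rw [← mul_assoc, key_frac hiw hjw (tv_ne_tv hij)]
    ring

lemma Eaux_inv_mul_at (i : C) :
    ∀ (l : List C) (w : FF C) (k : ℕ) (hk : k < l.length), l.Nodup → i ∉ l → tv i ≠ w →
      (∀ j ∈ l, tv j ≠ w) →
      (tv i - tv (l.get ⟨k, hk⟩))⁻¹ * Eaux w l
        = ∑ m ∈ Finset.Ico (k + 1) (l.length + 1), Eaux w (l.insertIdx m i)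
  | [], w, k, hk, _, _, _, _ => by simp at hk
  | j :: tl, w, 0, hk, hnd, hil, hiw, hlw => by
    have hij : i ≠ j := fun h => hil (h ▸ List.mem_cons_self (a := i) (l := tl))
    have hjw : tv j ≠ w := hlw j (List.mem_cons_self (a := j) (l := tl))
    have hitl : i ∉ tl := fun h => hil (List.mem_cons_of_mem j h)
    have hndc := List.nodup_cons.1 hnd
    have htlj : ∀ p ∈ tl, (tv p : FF C) ≠ tv j := fun p hp =>
      tv_ne_tv (by rintro rfl; exact hndc.1 hp)
    have hIH := Eaux_inv_mul i tl (tv j) hndc.2 hitl (tv_ne_tv hij) htlj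
    have hget : (j :: tl).get ⟨0, hk⟩ = j := rfl
    simp only [List.length_cons]
    rw [hget, Finset.sum_Ico_eq_sum_range]
    simp only [Nat.add_sub_cancel]
    have : ∀ m, (j :: tl).insertIdx (1 + m) i = j :: tl.insertIdx m i := by
      intro m; rw [add_comm]; exact List.insertIdx_succ_cons (xs := tl) (hd := j) (x := i) (i := m)
    simp only [this, Eaux]
    rw [← Finset.mul_sum, ← hIH]
    ring
  | j :: tl, w, k + 1, hk, hnd, hil, hiw, hlw => by
    have hij : i ≠ j := fun h => hil (h ▸ List.mem_cons_self (a := i) (l := tl))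
    have hjw : tv j ≠ w := hlw j (List.mem_cons_self (a := j) (l := tl))
    have hitl : i ∉ tl := fun h => hil (List.mem_cons_of_mem j h)
    have hndc := List.nodup_cons.1 hnd
    have htlj : ∀ p ∈ tl, (tv p : FF C) ≠ tv j := fun p hp =>
      tv_ne_tv (by rintro rfl; exact hndc.1 hp)
    have hk' : k < tl.length := by simpa using Nat.lt_of_succ_lt_succ (by simpa using hk)
    have hIH := Eaux_inv_mul_at i tl (tv j) k hk' hndc.2 hitl (tv_ne_tv hij) htlj
    have hget : (j :: tl).get ⟨k + 1, hk⟩ = tl.get ⟨k, hk'⟩ := rfl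
    simp only [List.length_cons]
    rw [hget]
    rw [Finset.sum_Ico_eq_sum_range] at hIH ⊢
    have hlen : tl.length + 1 + 1 - (k + 1 + 1) = tl.length + 1 - (k + 1) := by omega
    rw [hlen]
    have hins : ∀ m, (j :: tl).insertIdx (k + 1 + 1 + m) i = j :: tl.insertIdx (k + 1 + m) i := by
      intro m
      have : k + 1 + 1 + m = (k + 1 + m) + 1 := by omega
      rw [this]; exact List.insertIdx_succ_cons (xs := tl) (hd := j) (x := i)
    simp only [hins, Eaux]
    rw [← Finset.mul_sum, ← hIH]
    ring

lemma expand_mul (a : C → C → ℂ) (b : C → ℂ) (z : ℂ) (i : C) (l : List C)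
    (hnd : l.Nodup) (hil : i ∉ l) :
    (cc (b i) / (tv i - cc z) + ((l.map fun j => cc (a i j) / (tv i - tv j)).sum)) * Eaux (cc z) l
      = ∑ m ∈ Finset.range (l.length + 1),
          cc (b i + ((l.take m).map fun j => a i j).sum) * Eaux (cc z) (l.insertIdx m i) := by
  have hLz : ∀ j ∈ l, (tv j : FF C) ≠ cc z := fun j _ => tv_ne_cc j z
  rw [sum_map_eq_fin, add_mul, Finset.sum_mul, div_eq_mul_inv, mul_assoc,
    Eaux_inv_mul i l (cc z) hnd hil (tv_ne_cc i z) hLz]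
  have hterm : ∀ k : Fin l.length,
      cc (a i (l.get k)) / (tv i - tv (l.get k)) * Eaux (cc z) l
        = ∑ m ∈ Finset.range (l.length + 1),
            (if (k : ℕ) < m then cc (a i (l.get k)) * Eaux (cc z) (l.insertIdx m i) else 0) := by
    intro k
    rw [div_eq_mul_inv, mul_assoc,
      Eaux_inv_mul_at i l (cc z) k k.isLt hnd hil (tv_ne_cc i z) hLz, Finset.mul_sum]
    have hsub : Finset.Ico ((k : ℕ) + 1) (l.length + 1) ⊆ Finset.range (l.length + 1) := by
      intro m hm; simp only [Finset.mem_Ico] at hm; simp only [Finset.mem_range]; omega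
    rw [show ∑ m ∈ Finset.Ico ((k : ℕ) + 1) (l.length + 1),
          cc (a i (l.get k)) * Eaux (cc z) (l.insertIdx m i)
        = ∑ m ∈ Finset.Ico ((k : ℕ) + 1) (l.length + 1),
          (if (k : ℕ) < m then cc (a i (l.get k)) * Eaux (cc z) (l.insertIdx m i) else 0) from
      Finset.sum_congr rfl fun m hm => by
        rw [if_pos]; simp only [Finset.mem_Ico] at hm; omega]
    exact Finset.sum_subset hsub fun m _ hm => by
      rw [if_neg]; simp only [Finset.mem_Ico] at hm; intro h
      exact hm ⟨by omega, by simpa using Finset.mem_range.1 ‹m ∈ Finset.range (l.length + 1)›⟩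
  simp only [hterm]
  rw [Finset.sum_comm, Finset.mul_sum, ← Finset.sum_add_distrib]
  apply Finset.sum_congr rfl
  intro m hm
  have hiteq : ∀ k : Fin l.length,
      (if (k : ℕ) < m then cc (a i (l.get k)) * Eaux (cc z) (l.insertIdx m i) else 0)
        = (if (k : ℕ) < m then cc (a i (l.get k)) else 0) * Eaux (cc z) (l.insertIdx m i) := by
    intro k; split <;> simp
  simp only [hiteq]
  rw [← Finset.sum_mul, ← sum_map_take_eq (fun j => (cc (a i j) : FF C)) l m,
    cc_add, cc_list_sum, List.map_map, add_mul]
  rfl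

lemma insertIdx_append_left (i : C) :
    ∀ (A : List C) (k : ℕ), k ≤ A.length → ∀ x : C,
      (A ++ [x]).insertIdx k i = A.insertIdx k i ++ [x]
  | A, 0, _, x => by simp
  | [], k + 1, hk, x => by simp at hk
  | y :: A', k + 1, hk, x => by
    simp only [List.cons_append, List.insertIdx_succ_cons, List.cons_append,
      insertIdx_append_left i A' k (by simpa using hk) x]

lemma reverse_insertIdx (i : C) :
    ∀ (l : List C) (m : ℕ), m ≤ l.length →
      (l.insertIdx m i).reverse = l.reverse.insertIdx (l.length - m) i
  | l, 0, _ => by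
    simp only [List.insertIdx_zero, List.reverse_cons, Nat.sub_zero]
    rw [show l.length = l.reverse.length by simp, List.insertIdx_length_self]
  | [], m + 1, hm => by simp at hm
  | x :: t, m + 1, hm => by
    simp only [List.insertIdx_succ_cons, List.reverse_cons,
      reverse_insertIdx i t m (by simpa using hm)]
    rw [show (x :: t).length - (m + 1) = t.length - m by simp only [List.length_cons]; omega,
      insertIdx_append_left i t.reverse (t.length - m) (by simp) x]

lemma drop_reverse_take :
    ∀ (l : List C) (m : ℕ), m ≤ l.length → l.reverse.drop (l.length - m) = (l.take m).reverse
  | l, 0, _ => by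
    simp only [Nat.sub_zero, List.take_zero, List.reverse_nil]
    rw [show l.length = l.reverse.length by simp, List.drop_length]
  | [], m + 1, hm => by simp at hm
  | x :: t, m + 1, hm => by
    simp only [List.reverse_cons, List.take_succ_cons]
    rw [show (x :: t).length - (m + 1) = t.length - m by simp only [List.length_cons]; omega,
      List.drop_append_of_le_length (by simp),
      drop_reverse_take t m (by simpa using hm)]

variable [DecidableEq C]

lemma erase_insertIdx (i : C) :
    ∀ (l : List C) (m : ℕ), i ∉ l → m ≤ l.length → (l.insertIdx m i).erase i = l
  | l, 0, hil, _ => by simp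
  | [], m + 1, _, hm => by simp at hm
  | x :: t, m + 1, hil, hm => by
    have hxi : x ≠ i := fun h => hil (h ▸ List.mem_cons_self (a := x) (l := t))
    rw [List.insertIdx_succ_cons, List.erase_cons_tail (by simpa using hxi),
      erase_insertIdx i t m (fun h => hil (List.mem_cons_of_mem x h)) (by simpa using hm)]

lemma indexOf_insertIdx (i : C) :
    ∀ (l : List C) (m : ℕ), i ∉ l → m ≤ l.length → (l.insertIdx m i).idxOf i = m
  | l, 0, hil, _ => by simp
  | [], m + 1, _, hm => by simp at hm
  | x :: t, m + 1, hil, hm => by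
    have hxi : x ≠ i := fun h => hil (h ▸ List.mem_cons_self (a := x) (l := t))
    rw [List.insertIdx_succ_cons, List.idxOf_cons_ne _ hxi,
      indexOf_insertIdx i t m (fun h => hil (List.mem_cons_of_mem x h)) (by simpa using hm)]

lemma insertIdx_indexOf_erase (i : C) :
    ∀ (l : List C), i ∈ l → (l.erase i).insertIdx (l.idxOf i) i = l
  | [], h => by simp at h
  | x :: t, h => by
    by_cases hxi : x = i
    · subst hxi
      rw [List.erase_cons_head, List.idxOf_cons_self, List.insertIdx_zero]
    · have hit : i ∈ t := by
        rcases List.mem_cons.1 h with h1 | h1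
        · exact absurd h1.symm hxi
        · exact h1
      rw [List.erase_cons_tail (by simpa using hxi), List.idxOf_cons_ne _ hxi]
      show (x :: t.erase i).insertIdx (t.idxOf i + 1) i = x :: t
      rw [List.insertIdx_succ_cons, insertIdx_indexOf_erase i t hit]

/-- Simplified form of `Ssym` for nodup first list. -/
def S' (a : C → C → ℂ) (b : C → ℂ) : List C → List C → ℂ
  | vI, [] => if vI = [] then 1 else 0
  | vI, j :: rest =>
    if j ∈ vI then
      (b j + ((vI.take (vI.idxOf j)).map fun p => a p j).sum) * S' a b (vI.erase j) rest
    else 0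

lemma Ssym_eq_S' (a : C → C → ℂ) (b : C → ℂ) :
    ∀ (vJ vI : List C), vI.Nodup → Ssym a b vI vJ = S' a b vI vJ
  | [], vI, _ => rfl
  | j :: rest, vI, hnd => by
    rw [Ssym, S']
    by_cases hj : j ∈ vI
    · have hq0 : vI.idxOf j < vI.length := List.idxOf_lt_length_iff.2 hj
      rw [if_pos hj, Finset.sum_eq_single (⟨vI.idxOf j, hq0⟩ : Fin vI.length)]
      · rw [if_pos (List.idxOf_get hq0)]
        have hcoef : (∑ p : Fin vI.length,
            if p < (⟨vI.idxOf j, hq0⟩ : Fin vI.length) then a (vI.get p) j else 0)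
            = ((vI.take (vI.idxOf j)).map fun p => a p j).sum := by
          rw [sum_map_take_eq (fun p => a p j) vI (vI.idxOf j)]
          exact Finset.sum_congr rfl fun p _ => by simp only [Fin.lt_def]
        rw [hcoef, ← List.erase_eq_eraseIdx_of_idxOf rfl,
          Ssym_eq_S' a b rest (vI.erase j) (hnd.erase j)]
      · intro q _ hq
        rw [if_neg]
        intro hget
        exact hq (hnd.get_inj_iff.1 (hget.trans (List.idxOf_get hq0).symm))
      · intro habs; exact absurd (Finset.mem_univ _) habs
    · rw [if_neg hj]
      exact Finset.sum_eq_zero fun q _ => by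
        rw [if_neg]; intro h; apply hj; rw [← h]; exact List.get_mem vI q

lemma S'_append_cons_self (a : C → C → ℂ) (b : C → ℂ) {vI : List C} {i : C} (hi : i ∉ vI)
    (rJ : List C) :
    S' a b (vI ++ [i]) (i :: rJ) = (b i + (vI.map fun p => a p i).sum) * S' a b vI rJ := by
  rw [S']
  have hmem : i ∈ vI ++ [i] := by simp
  rw [if_pos hmem, List.idxOf_append_of_notMem hi]
  have h1 : List.idxOf i [i] = 0 := by simp
  rw [h1, Nat.add_zero, List.take_left, List.erase_append_right _ hi]
  simp

lemma S'_insert (a : C → C → ℂ) (ha : ∀ i j, a i j = a j i) (b : C → ℂ) :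
    ∀ (rJ vI : List C) (i : C) (m : ℕ), vI.Nodup → i ∉ vI → rJ.Perm vI → m ≤ rJ.length →
      S' a b (vI ++ [i]) (rJ.insertIdx m i)
        = (b i + ((rJ.drop m).map fun k => a i k).sum) * S' a b vI rJ
  | rJ, vI, i, 0, hnd, hi, hperm, _ => by
    rw [List.insertIdx_zero, S'_append_cons_self a b hi, List.drop_zero]
    have h1 : (vI.map fun p => a p i) = vI.map fun p => a i p :=
      List.map_congr_left fun p _ => ha p i
    have h2 : ((rJ.map fun k => a i k).sum) = ((vI.map fun k => a i k).sum) :=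
      (hperm.map _).sum_eq
    rw [h1, ← h2]
  | [], vI, i, m + 1, hnd, hi, hperm, hm => by simp at hm
  | j :: rest, vI, i, m + 1, hnd, hi, hperm, hm => by
    have hjvI : j ∈ vI := hperm.subset (List.mem_cons_self (a := j) (l := rest))
    have hrest : rest.Perm (vI.erase j) :=
      (List.perm_cons j).1 (hperm.trans (List.perm_cons_erase hjvI))
    have hnd' : (vI.erase j).Nodup := hnd.erase j
    have hi' : i ∉ vI.erase j := fun h => hi (List.mem_of_mem_erase h)
    have hIH := S'_insert a ha b rest (vI.erase j) i m hnd' hi' hrest (by simpa using hm)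
    rw [List.insertIdx_succ_cons, S', if_pos (show j ∈ vI ++ [i] by simp [hjvI]),
      List.idxOf_append_of_mem hjvI,
      List.take_append_of_le_length List.idxOf_le_length,
      List.erase_append_left _ hjvI, hIH, S', if_pos hjvI, List.drop_succ_cons]
    ring

/-- The factor of `B` associated to entry `j` with predecessors `pre`. -/
def Ffac (a : C → C → ℂ) (b : C → ℂ) (z : ℂ) (pre : List C) (j : C) : FF C :=
  cc (b j) / (tv j - cc z) + (pre.map fun k => cc (a j k) / (tv j - tv k)).sum

def Gaux (F : List C → C → FF C) : List C → List C → FF C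
  | _, [] => 1
  | pre, j :: tl => F pre j * Gaux F (pre ++ [j]) tl

lemma Gaux_eq_prod (F : List C → C → FF C) :
    ∀ (l pre : List C), Gaux F pre l = ∏ p : Fin l.length, F (pre ++ l.take p) (l.get p)
  | [], pre => by simp [Gaux]
  | j :: tl, pre => by
    rw [Gaux, Gaux_eq_prod F tl (pre ++ [j])]
    simp only [List.length_cons]
    rw [Fin.prod_univ_succ]
    congr 1
    · simp
    · apply Finset.prod_congr rfl
      intro p _
      congr 1
      · show pre ++ [j] ++ tl.take p = pre ++ (j :: tl).take (p + 1)
        rw [List.take_succ_cons, List.append_assoc]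
        rfl

lemma Gaux_append (F : List C → C → FF C) :
    ∀ (l1 l2 pre : List C), Gaux F pre (l1 ++ l2) = Gaux F pre l1 * Gaux F (pre ++ l1) l2
  | [], l2, pre => by simp [Gaux]
  | j :: t1, l2, pre => by
    show F pre j * Gaux F (pre ++ [j]) (t1 ++ l2)
        = F pre j * Gaux F (pre ++ [j]) t1 * Gaux F (pre ++ (j :: t1)) l2
    rw [Gaux_append F t1 l2 (pre ++ [j]), List.append_assoc, List.singleton_append, mul_assoc]

lemma Bfun_eq_Gaux (a : C → C → ℂ) (b : C → ℂ) (z : ℂ) (l : List C) :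
    Bfun a b z l = Gaux (Ffac a b z) [] l := by
  rw [Bfun, Gaux_eq_prod]
  apply Finset.prod_congr rfl
  intro p _
  rw [Ffac, List.nil_append]
  congr 1
  rw [sum_map_take_eq (fun k => cc (a (l.get p) k) / (tv (l.get p) - tv k)) l p]
  exact Finset.sum_congr rfl fun q _ => by simp only [Fin.lt_def]

lemma Bfun_concat (a : C → C → ℂ) (b : C → ℂ) (z : ℂ) (l : List C) (i : C) :
    Bfun a b z (l ++ [i]) = Bfun a b z l * Ffac a b z l i := by
  rw [Bfun_eq_Gaux, Bfun_eq_Gaux, Gaux_append]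
  simp [Gaux]

lemma sum_perm_insert {l : List C} {i : C} (hil : i ∉ l) (f : List C → FF C) :
    ∑ vJ ∈ (l ++ [i]).permutations.toFinset, f vJ
      = ∑ p ∈ l.permutations.toFinset ×ˢ Finset.range (l.length + 1),
          f (p.1.insertIdx p.2 i) := by
  have herase : (l ++ [i]).erase i = l := by
    rw [List.erase_append_right _ hil]; simp
  refine Finset.sum_nbij' (i := fun vJ => (vJ.erase i, vJ.idxOf i))
    (j := fun p => p.1.insertIdx p.2 i) ?_ ?_ ?_ ?_ ?_
  · intro vJ hvJm
    have hvJ : vJ.Perm (l ++ [i]) := List.mem_permutations.1 (List.mem_toFinset.1 hvJm)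
    have hiJ : i ∈ vJ := hvJ.mem_iff.2 (by simp)
    refine Finset.mem_product.2 ⟨List.mem_toFinset.2 (List.mem_permutations.2 ?_), ?_⟩
    · exact herase ▸ hvJ.erase i
    · refine Finset.mem_range.2 ?_
      have := List.idxOf_lt_length_iff.2 hiJ
      have hlen : vJ.length = l.length + 1 := by simpa using hvJ.length_eq
      show List.idxOf i vJ < l.length + 1
      omega
  · rintro ⟨vJ', m⟩ hp
    obtain ⟨h1, h2⟩ := Finset.mem_product.1 hp
    have hvJ' : vJ'.Perm l := List.mem_permutations.1 (List.mem_toFinset.1 h1)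
    have hm : m ≤ vJ'.length := by
      rw [hvJ'.length_eq]; exact Nat.lt_succ_iff.1 (Finset.mem_range.1 h2)
    refine List.mem_toFinset.2 (List.mem_permutations.2 ?_)
    exact ((List.perm_insertIdx i vJ' hm).trans (hvJ'.cons i)).trans
      (List.perm_append_singleton i l).symm
  · intro vJ hvJm
    have hvJ : vJ.Perm (l ++ [i]) := List.mem_permutations.1 (List.mem_toFinset.1 hvJm)
    have hiJ : i ∈ vJ := hvJ.mem_iff.2 (by simp)
    exact insertIdx_indexOf_erase i vJ hiJ
  · rintro ⟨vJ', m⟩ hp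
    obtain ⟨h1, h2⟩ := Finset.mem_product.1 hp
    have hvJ' : vJ'.Perm l := List.mem_permutations.1 (List.mem_toFinset.1 h1)
    have hm : m ≤ vJ'.length := by
      rw [hvJ'.length_eq]; exact Nat.lt_succ_iff.1 (Finset.mem_range.1 h2)
    have hiJ' : i ∉ vJ' := fun h => hil (hvJ'.subset h)
    simp only [Prod.mk.injEq]
    exact ⟨erase_insertIdx i vJ' m hiJ' hm, indexOf_insertIdx i vJ' m hiJ' hm⟩
  · intro vJ hvJm
    have hvJ : vJ.Perm (l ++ [i]) := List.mem_permutations.1 (List.mem_toFinset.1 hvJm)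
    have hiJ : i ∈ vJ := hvJ.mem_iff.2 (by simp)
    rw [insertIdx_indexOf_erase i vJ hiJ]

lemma core (a : C → C → ℂ) (ha : ∀ i j, a i j = a j i) (b : C → ℂ) (z : ℂ) (l : List C) :
    l.Nodup →
      Bfun a b z l
        = ∑ vJ ∈ l.permutations.toFinset, cc (S' a b l vJ.reverse) * Eaux (cc z) vJ := by
  induction l using List.reverseRecOn with
  | nil =>
    intro _
    simp [Bfun, S', Eaux, cc_one]
  | append_singleton l i ih =>
    intro hnd
    obtain ⟨hl, -, hdisj⟩ := List.nodup_append.1 hnd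
    have hi : i ∉ l := fun h => hdisj i h i (by simp) rfl
    rw [Bfun_concat, ih hl, Finset.sum_mul, sum_perm_insert hi, Finset.sum_product]
    apply Finset.sum_congr rfl
    intro vJ' hvJ'mem
    have hvJ' : vJ'.Perm l := List.mem_permutations.1 (List.mem_toFinset.1 hvJ'mem)
    have hndJ : vJ'.Nodup := hvJ'.nodup_iff.2 hl
    have hiJ : i ∉ vJ' := fun h => hi (hvJ'.subset h)
    have hlen : vJ'.length = l.length := hvJ'.length_eq
    have hstep : ∀ m ∈ Finset.range (l.length + 1),
        cc (S' a b (l ++ [i]) ((vJ'.insertIdx m i).reverse)) * Eaux (cc z) (vJ'.insertIdx m i)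
          = cc (S' a b l vJ'.reverse) *
              (cc (b i + ((vJ'.take m).map fun k => a i k).sum)
                * Eaux (cc z) (vJ'.insertIdx m i)) := by
      intro m hm
      have hm' : m ≤ vJ'.length := by rw [hlen]; exact Nat.lt_succ_iff.1 (Finset.mem_range.1 hm)
      rw [reverse_insertIdx i vJ' m hm',
        S'_insert a ha b vJ'.reverse l i (vJ'.length - m) hl hi (vJ'.reverse_perm.trans hvJ')
          (by simp),
        drop_reverse_take vJ' m hm', List.map_reverse, List.sum_reverse, cc_mul]
      ring
    rw [Finset.sum_congr rfl hstep, ← Finset.mul_sum]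
    have hexp := expand_mul a b z i vJ' hndJ hiJ
    rw [hlen] at hexp
    rw [← hexp, Ffac]
    have hmapsum : ((vJ'.map fun j => cc (a i j) / (tv i - tv j)).sum : FF C)
        = ((l.map fun j => cc (a i j) / (tv i - tv j)).sum) := (hvJ'.map _).sum_eq
    rw [hmapsum]
    ring

end Stmt0

/-- **Key Lemma** (statement 0): `B_{vI}(t_I;z_s) = ∑_{vJ ∈ Seq(I)} S(vI,vJ)^{(s)} E_{vJ;s}(t_I;z_s)`.
Here `Seq(I)` is realized as the (finite) set of permutations of the nodup list `vI`. -/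
theorem statement0 {C : Type} [Fintype C] [DecidableEq C]
    (n : ℕ) (hn : 1 ≤ n) (z : Fin n → ℂ) (hz : Function.Injective z)
    (a : C → C → ℂ) (ha : ∀ i j, a i j = a j i) (b : C → Fin n → ℂ)
    (vI : List C) (hnd : vI.Nodup) (s : Fin n) :
    Bfun a (fun i => b i s) (z s) vI
      = ∑ vJ ∈ vI.permutations.toFinset,
          cc (Sfun a (fun i => b i s) vI vJ) * Efun (z s) vJ := by
  rw [Stmt0.core a ha (fun i => b i s) (z s) vI hnd]
  refine Finset.sum_congr rfl fun vJ _ => ?_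
  have h : Sfun a (fun i => b i s) vI vJ = Stmt0.S' a (fun i => b i s) vI vJ.reverse :=
    Stmt0.Ssym_eq_S' a (fun i => b i s) vJ.reverse vI hnd
  rw [h]
  rfl

end
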